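/- Let p ≥ 2 and define V : ℝ^(N×n) → ℝ by V(z) = |z|² + |z|^p. Then for every open set ω ⊆ ℝⁿ of finite positive Lebesgue measure, there exists a constant c = c(p) > 0 such that for every f ∈ L^p(ω, ℝ^(N×n)) and every constant matrix ξ ∈ ℝ^(N×n), the mean value over ω of |V(f − (f)_ω)|² is at most c times the mean value over ω of |V(f − ξ)|², where (f)_ω denotes the average of f over ω. -/

import Mathlib

set_option maxHeartbeats 1000000


open MeasureTheory Set

theorem average_V_quasi_minimality (N n : ℕ) (p : ℝ) (hp : 2 ≤ p)
    (V : EuclideanSpace ℝ (Fin N × Fin n) → ℝ)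
    (hV : ∀ z, V z = ‖z‖ ^ 2 + ‖z‖ ^ p) :
    ∀ ω : Set (EuclideanSpace ℝ (Fin n)), IsOpen ω →
      0 < volume ω → volume ω < ⊤ →
      ∃ c : ℝ, 0 < c ∧
        ∀ f : EuclideanSpace ℝ (Fin n) → EuclideanSpace ℝ (Fin N × Fin n),
          MemLp f (ENNReal.ofReal p) (volume.restrict ω) →
          ∀ ξ : EuclideanSpace ℝ (Fin N × Fin n),
            ⨍ x in ω, (V (f x - ⨍ y in ω, f y)) ^ 2 ≤
              c * ⨍ x in ω, (V (f x - ξ)) ^ 2 := by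
  intro ω hω hpos htop
  have hp0 : (0:ℝ) < p := lt_of_lt_of_le (by norm_num) hp
  have hp1 : (1:ℝ) ≤ p := le_trans (by norm_num) hp
  set μ := volume.restrict ω with hμdef
  haveI hfin : IsFiniteMeasure μ := ⟨by simpa [hμdef, Measure.restrict_apply_univ] using htop⟩
  have hμuniv : μ univ = volume ω := by simp [hμdef, Measure.restrict_apply_univ]
  haveI hne : NeZero μ := by
    refine ⟨fun h => ?_⟩
    rw [h] at hμuniv
    simp at hμuniv
    exact absurd hμuniv.symm (ne_of_gt hpos)
  have h2p : (0:ℝ) < 2 ^ p := Real.rpow_pos_of_pos (by norm_num) p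
  -- monotonicity of t ↦ t^2 + t^p
  have hφmono : ∀ s t : ℝ, 0 ≤ s → s ≤ t → s ^ 2 + s ^ p ≤ t ^ 2 + t ^ p := by
    intro s t hs hst
    gcongr
  have hφnn : ∀ t : ℝ, 0 ≤ t → 0 ≤ t ^ 2 + t ^ p := by
    intro t ht; positivity
  -- doubling
  have hφ2 : ∀ t : ℝ, 0 ≤ t → (2*t) ^ 2 + (2*t) ^ p ≤ 2 ^ p * (t ^ 2 + t ^ p) := by
    intro t ht
    have h4 : (4:ℝ) ≤ 2 ^ p := by
      have := Real.rpow_le_rpow_of_exponent_le (by norm_num : (1:ℝ) ≤ 2) hp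
      rwa [show ((2:ℝ) ^ (2:ℝ)) = 4 by
        rw [show (2:ℝ) = ((2:ℕ):ℝ) from by norm_num, Real.rpow_natCast]; norm_num] at this
    have h1 : (2*t) ^ 2 ≤ 2 ^ p * t ^ 2 := by nlinarith [sq_nonneg t]
    have h2 : (2*t) ^ p = 2 ^ p * t ^ p := Real.mul_rpow (by norm_num) ht
    linarith
  -- key subadditivity for V
  have hVnorm : ∀ z : EuclideanSpace ℝ (Fin N × Fin n), V z = ‖z‖ ^ 2 + ‖z‖ ^ p := hV
  have hkey : ∀ z w : EuclideanSpace ℝ (Fin N × Fin n),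
      V (z + w) ≤ 2 ^ p * (V z + V w) := by
    intro z w
    rw [hV, hV, hV]
    have hzw : ‖z + w‖ ≤ 2 * max ‖z‖ ‖w‖ := by
      refine le_trans (norm_add_le z w) ?_
      have := le_max_left ‖z‖ ‖w‖
      have := le_max_right ‖z‖ ‖w‖
      linarith
    have hM : (0:ℝ) ≤ max ‖z‖ ‖w‖ := le_trans (norm_nonneg z) (le_max_left _ _)
    have step1 := hφmono _ _ (norm_nonneg _) hzw
    have step2 := hφ2 _ hM
    have step3 : max ‖z‖ ‖w‖ ^ 2 + max ‖z‖ ‖w‖ ^ p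
        ≤ (‖z‖ ^ 2 + ‖z‖ ^ p) + (‖w‖ ^ 2 + ‖w‖ ^ p) := by
      rcases max_cases ‖z‖ ‖w‖ with ⟨h, _⟩ | ⟨h, _⟩ <;> rw [h]
      · have := hφnn ‖w‖ (norm_nonneg w); linarith
      · have := hφnn ‖z‖ (norm_nonneg z); linarith
    calc ‖z + w‖ ^ 2 + ‖z + w‖ ^ p ≤ (2 * max ‖z‖ ‖w‖) ^ 2 + (2 * max ‖z‖ ‖w‖) ^ p := step1
      _ ≤ 2 ^ p * (max ‖z‖ ‖w‖ ^ 2 + max ‖z‖ ‖w‖ ^ p) := step2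
      _ ≤ 2 ^ p * ((‖z‖ ^ 2 + ‖z‖ ^ p) + (‖w‖ ^ 2 + ‖w‖ ^ p)) := by nlinarith
  have hVnn : ∀ z : EuclideanSpace ℝ (Fin N × Fin n), 0 ≤ V z := by
    intro z; rw [hV]; positivity
  set K : ℝ := 2 * (2 ^ p) ^ 2 with hKdef
  have hK0 : 0 < K := by positivity
  have hkeysq : ∀ z w : EuclideanSpace ℝ (Fin N × Fin n),
      (V (z + w)) ^ 2 ≤ K * ((V z) ^ 2 + (V w) ^ 2) := by
    intro z w
    have h1 := hkey z w
    have h2 := hVnn (z + w)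
    have h3 := hVnn z
    have h4 := hVnn w
    have h5 : (V (z + w)) ^ 2 ≤ (2 ^ p * (V z + V w)) ^ 2 := by nlinarith
    have h6 : (2 ^ p * (V z + V w)) ^ 2 ≤ K * ((V z) ^ 2 + (V w) ^ 2) := by
      rw [hKdef]; nlinarith [sq_nonneg (V z - V w), sq_nonneg ((2:ℝ) ^ p)]
    linarith
  refine ⟨2 * K, by positivity, ?_⟩
  intro f hf ξ
  have hfm : AEStronglyMeasurable f μ := hf.1
  have hfint : Integrable f μ := hf.integrable (ENNReal.one_le_ofReal.2 hp1)
  -- measurability of the integrands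
  have hmeas : ∀ a : EuclideanSpace ℝ (Fin N × Fin n),
      AEStronglyMeasurable (fun x => (V (f x - a)) ^ 2) μ := by
    intro a
    have h1 : AEMeasurable (fun x => ‖f x - a‖) μ :=
      ((hfm.sub aestronglyMeasurable_const).norm).aemeasurable
    have h2 : AEMeasurable (fun x => (‖f x - a‖ ^ 2 + ‖f x - a‖ ^ p) ^ 2) μ := by
      fun_prop
    refine (aestronglyMeasurable_iff_aemeasurable).2 ?_
    simp only [hV]
    exact h2
  -- transfer of integrability between reference points
  have htrans : ∀ a b : EuclideanSpace ℝ (Fin N × Fin n),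
      Integrable (fun x => (V (f x - a)) ^ 2) μ →
      Integrable (fun x => (V (f x - b)) ^ 2) μ := by
    intro a b hI
    refine Integrable.mono' ((hI.add (integrable_const ((V (a - b)) ^ 2))).const_mul K)
      (hmeas b) ?_
    refine Filter.Eventually.of_forall fun x => ?_
    have h1 : f x - b = (f x - a) + (a - b) := by abel
    have h2 := hkeysq (f x - a) (a - b)
    rw [← h1] at h2
    have h3 := hVnn (f x - b)
    rw [Real.norm_eq_abs, abs_of_nonneg (by positivity)]
    exact h2
  by_cases hI : Integrable (fun x => (V (f x - ξ)) ^ 2) μ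
  · -- main case
    set m := ⨍ y in ω, f y with hmdef
    have hIm : Integrable (fun x => (V (f x - m)) ^ 2) μ := htrans ξ m hI
    have hgnorm : Integrable (fun x => ‖f x - ξ‖) μ := (hfint.sub (integrable_const ξ)).norm
    -- the convex comparison function
    set Φ : ℝ → ℝ := fun t => t ^ (4:ℝ) + (2 * t ^ (p+2) + t ^ (p*2)) with hΦdef
    have hΦeq : ∀ t : ℝ, 0 ≤ t → Φ t = (t ^ 2 + t ^ p) ^ 2 := by
      intro t ht
      have e1 : t ^ (4:ℝ) = (t ^ 2) ^ 2 := by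
        rw [show (4:ℝ) = ((4:ℕ):ℝ) by norm_num, Real.rpow_natCast]; ring
      have e2 : t ^ (p+2) = t ^ p * t ^ 2 := by
        rw [Real.rpow_add' ht (by positivity),
          show (2:ℝ) = ((2:ℕ):ℝ) by norm_num, Real.rpow_natCast]
      have e3 : t ^ (p*2) = (t ^ p) ^ 2 := by
        rw [Real.rpow_mul ht, show (2:ℝ) = ((2:ℕ):ℝ) by norm_num, Real.rpow_natCast]
      rw [hΦdef]; simp only []
      rw [e1, e2, e3]; ring
    have hconv : ConvexOn ℝ (Ici 0) Φ := by
      refine (convexOn_rpow (by norm_num)).add (ConvexOn.add ?_ (convexOn_rpow (by nlinarith)))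
      exact ConvexOn.smul (by norm_num) (convexOn_rpow (by linarith))
    have hcont : ContinuousOn Φ (Ici 0) := by
      intro x hx
      have c1 : ContinuousAt (fun t : ℝ => t ^ (4:ℝ)) x :=
        Real.continuousAt_rpow_const x 4 (Or.inr (by norm_num))
      have c2 : ContinuousAt (fun t : ℝ => t ^ (p+2)) x :=
        Real.continuousAt_rpow_const x (p+2) (Or.inr (by linarith))
      have c3 : ContinuousAt (fun t : ℝ => t ^ (p*2)) x :=
        Real.continuousAt_rpow_const x (p*2) (Or.inr (by nlinarith))
      exact (c1.add ((continuousAt_const.mul c2).add c3)).continuousWithinAt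
    have hIΦ : Integrable (fun x => Φ ‖f x - ξ‖) μ := by
      refine hI.congr (Filter.Eventually.of_forall fun x => ?_)
      show V (f x - ξ) ^ 2 = Φ ‖f x - ξ‖
      rw [hΦeq _ (norm_nonneg _), hV]
    have hJ : Φ (⨍ x, ‖f x - ξ‖ ∂μ) ≤ ⨍ x, Φ ‖f x - ξ‖ ∂μ :=
      hconv.map_average_le hcont isClosed_Ici
        (Filter.Eventually.of_forall fun x => norm_nonneg (f x - ξ)) hgnorm hIΦ
    -- notation for the basic quantities
    set T : ℝ := (volume ω).toReal with hTdef
    have hT : 0 < T := ENNReal.toReal_pos (ne_of_gt hpos) (ne_of_lt htop)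
    have hμT : μ.real univ = T := by show (μ univ).toReal = T; rw [hμuniv]
    set R : ℝ := ∫ x, (V (f x - ξ)) ^ 2 ∂μ with hRdef
    have hR0 : 0 ≤ R := integral_nonneg fun x => by positivity
    set A : ℝ := ⨍ x, ‖f x - ξ‖ ∂μ with hAdef
    have hA0 : 0 ≤ A := by
      rw [hAdef, average_eq]
      have : 0 ≤ ∫ x, ‖f x - ξ‖ ∂μ := integral_nonneg fun x => norm_nonneg _
      positivity
    -- Φ of the average of norms is bounded by the average of (V (f - ξ))^2
    have hΦA : Φ A ≤ T⁻¹ * R := by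
      have : (⨍ x, Φ ‖f x - ξ‖ ∂μ) = T⁻¹ * R := by
        rw [average_eq, hμT, smul_eq_mul, hRdef]
        congr 1
        refine integral_congr_ae (Filter.Eventually.of_forall fun x => ?_)
        show Φ ‖f x - ξ‖ = V (f x - ξ) ^ 2
        rw [hΦeq _ (norm_nonneg _), hV]
      rw [← this]; exact hJ
    -- the average of f minus ξ
    have hmean : (⨍ x, (f x - ξ) ∂μ) = m - ξ := by
      have h1 : (∫ x, (f x - ξ) ∂μ) = (∫ x, f x ∂μ) - μ.real univ • ξ := by
        rw [integral_sub hfint (integrable_const ξ), integral_const]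
      rw [average_eq, h1, smul_sub, smul_smul, hμT,
        inv_mul_cancel₀ (ne_of_gt hT), one_smul]
      congr 1
      rw [hmdef, average_eq, hμT, hμdef]
    have hnormle : ‖m - ξ‖ ≤ A := by
      rw [← hmean, average_eq, hAdef, average_eq, norm_smul, hμT, smul_eq_mul]
      have h1 : ‖T⁻¹‖ = T⁻¹ := by
        rw [Real.norm_eq_abs, abs_of_nonneg (by positivity)]
      rw [h1]
      have h2 : ‖∫ x, (f x - ξ) ∂μ‖ ≤ ∫ x, ‖f x - ξ‖ ∂μ := norm_integral_le_integral_norm _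
      have h3 : (0:ℝ) ≤ T⁻¹ := by positivity
      exact mul_le_mul_of_nonneg_left h2 h3
    -- bound on the constant term
    have hVm : (V (ξ - m)) ^ 2 ≤ T⁻¹ * R := by
      refine le_trans ?_ hΦA
      rw [hΦeq _ hA0, hV]
      have h1 : ‖ξ - m‖ = ‖m - ξ‖ := norm_sub_rev _ _
      have h2 : ‖ξ - m‖ ^ 2 + ‖ξ - m‖ ^ p ≤ A ^ 2 + A ^ p := by
        rw [h1]; exact hφmono _ _ (norm_nonneg _) hnormle
      have h3 : 0 ≤ ‖ξ - m‖ ^ 2 + ‖ξ - m‖ ^ p := hφnn _ (norm_nonneg _)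
      exact pow_le_pow_left₀ h3 h2 2
    -- pointwise bound and integration
    have hptw : ∀ x, (V (f x - m)) ^ 2 ≤ K * ((V (f x - ξ)) ^ 2 + (V (ξ - m)) ^ 2) := by
      intro x
      have h1 : f x - m = (f x - ξ) + (ξ - m) := by abel
      rw [h1]; exact hkeysq _ _
    have hInt2 : Integrable (fun x => K * ((V (f x - ξ)) ^ 2 + (V (ξ - m)) ^ 2)) μ :=
      (hI.add (integrable_const _)).const_mul K
    have hstep : (∫ x, (V (f x - m)) ^ 2 ∂μ) ≤ K * (R + T * (V (ξ - m)) ^ 2) := by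
      have h1 := integral_mono_ae hIm hInt2 (Filter.Eventually.of_forall hptw)
      calc (∫ x, (V (f x - m)) ^ 2 ∂μ)
          ≤ ∫ x, K * ((V (f x - ξ)) ^ 2 + (V (ξ - m)) ^ 2) ∂μ := h1
        _ = K * (R + T * (V (ξ - m)) ^ 2) := by
            rw [integral_const_mul, integral_add hI (integrable_const _), integral_const,
              hμT, smul_eq_mul, ← hRdef]
    have hfinal : (∫ x, (V (f x - m)) ^ 2 ∂μ) ≤ 2 * K * R := by
      have h2 : T * (V (ξ - m)) ^ 2 ≤ R := by
        have := mul_le_mul_of_nonneg_left hVm (le_of_lt hT)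
        rwa [← mul_assoc, mul_inv_cancel₀ (ne_of_gt hT), one_mul] at this
      nlinarith
    -- convert to averages
    have hgoalL : (⨍ x in ω, (V (f x - m)) ^ 2) = T⁻¹ * ∫ x, (V (f x - m)) ^ 2 ∂μ := by
      rw [average_eq, hμT, smul_eq_mul]
    have hgoalR : (⨍ x in ω, (V (f x - ξ)) ^ 2) = T⁻¹ * R := by
      rw [average_eq, hμT, smul_eq_mul, hRdef]
    rw [hgoalL, hgoalR]
    have h4 : (0:ℝ) ≤ T⁻¹ := by positivity
    calc T⁻¹ * ∫ x, (V (f x - m)) ^ 2 ∂μ ≤ T⁻¹ * (2 * K * R) :=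
          mul_le_mul_of_nonneg_left hfinal h4
      _ = 2 * K * (T⁻¹ * R) := by ring
  · -- degenerate case: both sides vanish
    have hIm : ¬ Integrable (fun x => (V (f x - ⨍ y in ω, f y)) ^ 2) μ := by
      intro h
      exact hI (htrans _ _ h)
    have hzero : ∀ g : EuclideanSpace ℝ (Fin n) → ℝ, ¬ Integrable g μ →
        (⨍ x, g x ∂μ) = 0 := by
      intro g hg
      rw [average_eq, integral_undef hg, smul_zero]
    rw [hzero _ hIm, hzero _ hI]
    simp
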